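/- Let A ⊆ ℝ^d be a convex set, let R : ℝ^d → ℝ be differentiable and convex, let z ∈ ℝ^d and c ∈ A, and let a* be a minimizer over A of a ↦ z·a + D_R(a, c). Then for every b ∈ A: z · (a* − b) ≤ D_R(b, c) − D_R(b, a*) − D_R(a*, c). -/

import Mathlib

open Topology Filter


/-- The standard dot product on `ℝ^d`. -/
noncomputable def dot {d : ℕ} (g x : Fin d → ℝ) : ℝ := ∑ i, g i * x i

/-- The Bregman divergence `D_R(x,y) = R(x) − R(y) − ∇R(y)·(x−y)` of a differentiable
function `R : ℝ^d → ℝ`. -/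
noncomputable def breg {d : ℕ} (R : (Fin d → ℝ) → ℝ) (x y : Fin d → ℝ) : ℝ :=
  R x - R y - fderiv ℝ R y (x - y)

private lemma dot_linear_aux {d : ℕ} (z x y : Fin d → ℝ) (t : ℝ) :
    dot z (x + t • y) = dot z x + t * dot z y := by
  simp only [dot, Pi.add_apply, Pi.smul_apply, smul_eq_mul, mul_add, Finset.sum_add_distrib,
    Finset.mul_sum]
  congr 1
  exact Finset.sum_congr rfl fun i _ => by ring

private lemma dot_sub_aux {d : ℕ} (z x y : Fin d → ℝ) :
    dot z (x - y) = dot z x - dot z y := by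
  simp only [dot, Pi.sub_apply, mul_sub, Finset.sum_sub_distrib]

/-- Three-point lemma for Bregman projections: if `a*` minimizes
`a ↦ z·a + D_R(a,c)` over the convex set `A`, then for every `b ∈ A`,
`z·(a* − b) ≤ D_R(b,c) − D_R(b,a*) − D_R(a*,c)`. -/
theorem bregman_three_point {d : ℕ}
    (A : Set (Fin d → ℝ)) (hA : Convex ℝ A)
    (R : (Fin d → ℝ) → ℝ) (hRdiff : Differentiable ℝ R)
    (hRconv : ConvexOn ℝ Set.univ R)
    (z c astar : Fin d → ℝ) (hc : c ∈ A) (hastar : astar ∈ A)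
    (hmin : IsMinOn (fun a => dot z a + breg R a c) A astar) :
    ∀ b ∈ A, dot z (astar - b) ≤ breg R b c - breg R b astar - breg R astar c := by
  intro b hb
  set v : Fin d → ℝ := b - astar with hv
  set m : ℝ := dot z v + fderiv ℝ R astar v - fderiv ℝ R c v with hm
  set φ : ℝ → ℝ := fun t => dot z (astar + t • v) + breg R (astar + t • v) c with hφ
  -- the curve
  have hγ : HasDerivAt (fun t : ℝ => astar + t • v) v 0 := by
    have h := ((hasDerivAt_id (0 : ℝ)).smul_const v).const_add astar
    simpa using h
  have hγ0 : astar + (0 : ℝ) • v = astar := by simp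
  -- derivative of φ at 0
  have hφ' : HasDerivAt φ m 0 := by
    have h1 : HasDerivAt (fun t : ℝ => dot z (astar + t • v)) (dot z v) 0 := by
      have : (fun t : ℝ => dot z (astar + t • v)) =
          fun t : ℝ => dot z astar + t * dot z v := by
        funext t; exact dot_linear_aux z astar v t
      rw [this]
      exact (hasDerivAt_mul_const (dot z v)).const_add _
    have h2 : HasDerivAt (fun t : ℝ => R (astar + t • v)) (fderiv ℝ R astar v) 0 := by
      have hR : HasFDerivAt R (fderiv ℝ R astar) (astar + (0:ℝ) • v) := by
        rw [hγ0]; exact (hRdiff astar).hasFDerivAt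
      have h := hR.comp_hasDerivAt 0 hγ
      exact h
    have h3 : HasDerivAt (fun t : ℝ => (fderiv ℝ R c) (astar + t • v - c))
        ((fderiv ℝ R c) v) 0 := by
      have : (fun t : ℝ => (fderiv ℝ R c) (astar + t • v - c)) =
          fun t : ℝ => (fderiv ℝ R c) (astar - c) + t * (fderiv ℝ R c) v := by
        funext t
        have : astar + t • v - c = (astar - c) + t • v := by abel
        rw [this, map_add, map_smul]; simp
      rw [this]
      exact (hasDerivAt_mul_const _).const_add _
    have h := h1.add (((h2.sub_const (R c)).sub h3))
    simp only [hφ, breg]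
    refine h.congr_deriv ?_
    rw [hm]; ring
  -- minimality along the segment
  have hmem : ∀ t ∈ Set.Ioc (0:ℝ) 1, astar + t • v ∈ A := by
    intro t ht
    have := hA hastar hb (by linarith [ht.1, ht.2] : (0:ℝ) ≤ 1 - t) (le_of_lt ht.1)
      (by ring : (1 - t) + t = 1)
    convert this using 1
    simp only [hv]
    module
  have hφmin : ∀ t ∈ Set.Ioc (0:ℝ) 1, φ 0 ≤ φ t := by
    intro t ht
    have h0 : φ 0 = dot z astar + breg R astar c := by simp [hφ]
    rw [h0]
    exact hmin (hmem t ht)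
  -- conclude 0 ≤ m
  have hslope : Filter.Tendsto (slope φ 0) (𝓝[>] (0:ℝ)) (𝓝 m) := by
    have h := (hφ'.hasDerivWithinAt (s := Set.Ioi (0:ℝ)))
    rw [hasDerivWithinAt_iff_tendsto_slope] at h
    simpa [Set.diff_singleton_eq_self (by simp : (0:ℝ) ∉ Set.Ioi (0:ℝ))] using h
  have hm0 : 0 ≤ m := by
    refine ge_of_tendsto hslope ?_
    filter_upwards [Ioc_mem_nhdsGT (by norm_num : (0:ℝ) < 1)] with t ht
    have h1 := hφmin t ht
    have h2 : slope φ 0 t = (φ t - φ 0) / t := by simp [slope, div_eq_inv_mul]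
    rw [h2]
    apply div_nonneg (by linarith) (le_of_lt ht.1)
  -- rewrite the goal
  have hcid : (fderiv ℝ R c) (b - c) - (fderiv ℝ R c) (astar - c) = (fderiv ℝ R c) v := by
    rw [← map_sub]
    congr 1
    simp only [hv]; abel
  have hdz : dot z (astar - b) = -(dot z v) := by
    rw [hv, dot_sub_aux, dot_sub_aux]; ring
  simp only [breg, hdz]
  have hbv : b - astar = v := hv.symm
  rw [hbv]
  rw [hm] at hm0
  linarith [hcid]
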